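/- arXiv:2001.11455 — 6 statements merged into one kernel-verified Lean document; each statement's English description precedes it below -/
import Mathlib

section
/- Every real n×m matrix M with nonnegative entries and constant column sums (Σ_a M_{a,x} = 𝒞 for all x) admits a decomposition M_{a,x} = Σ_{f : Fin m → Fin n} δ_{a, f(x)} C_f with all coefficients C_f ≥ 0 and Σ_f C_f = 𝒞. -/
/-- every entrywise-nonnegative real `n × m` matrix with constant column
sums `𝒞` is a nonnegative combination of the deterministic matrices `δ_{a, f x}`,
with total weight `𝒞`. -/
theorem stmt1 (n m : ℕ) (hn : 1 ≤ n) (hm : 1 ≤ m)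
    (M : Fin n → Fin m → ℝ) (hpos : ∀ a x, 0 ≤ M a x)
    (𝒞 : ℝ) (hsum : ∀ x, ∑ a, M a x = 𝒞) :
    ∃ C : (Fin m → Fin n) → ℝ,
      (∀ f, 0 ≤ C f) ∧
      (∑ f : Fin m → Fin n, C f) = 𝒞 ∧
      (∀ a x, M a x = ∑ f : Fin m → Fin n, (if a = f x then C f else 0)) := by
  have x0 : Fin m := ⟨0, hm⟩
  have hC0 : 0 ≤ 𝒞 := (hsum x0) ▸ Finset.sum_nonneg (fun a _ => hpos a x0)
  rcases eq_or_lt_of_le hC0 with h0 | hCpos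
  · refine ⟨fun _ => 0, fun _ => le_refl 0, by simp [← h0], ?_⟩
    intro a x
    have hz : M a x = 0 := by
      have h := (Finset.sum_eq_zero_iff_of_nonneg (fun b _ => hpos b x)).mp
        (by rw [hsum x, ← h0])
      exact h a (Finset.mem_univ a)
    simp [hz]
  · have hCne : (𝒞 : ℝ) ^ (m - 1) ≠ 0 := pow_ne_zero _ (ne_of_gt hCpos)
    refine ⟨fun f => (∏ y, M (f y) y) / 𝒞 ^ (m - 1), ?_, ?_, ?_⟩
    · intro f
      exact div_nonneg (Finset.prod_nonneg fun y _ => hpos _ _) (pow_nonneg hC0 _)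
    · rw [← Finset.sum_div]
      have key : ∑ f : Fin m → Fin n, ∏ y, M (f y) y = 𝒞 ^ m := by
        rw [← Fintype.prod_sum (fun y a => M a y)]
        simp [hsum]
      rw [key, div_eq_iff hCne, ← pow_succ']
      congr 1
      omega
    · intro a x
      set N : Fin m → Fin n → ℝ := fun y b => if y = x then (if b = a then M b y else 0) else M b y with hN
      have step1 : ∀ f : Fin m → Fin n,
          (if a = f x then ∏ y, M (f y) y else 0) = ∏ y, N y (f y) := by
        intro f
        by_cases h : a = f x
        · rw [if_pos h]
          apply Finset.prod_congr rfl
          intro y _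
          by_cases hy : y = x
          · subst hy; simp [hN, h.symm]
          · simp [hN, hy]
        · rw [if_neg h]
          symm
          apply Finset.prod_eq_zero (Finset.mem_univ x)
          simp only [hN, if_pos rfl]
          exact if_neg (fun hh : f x = a => h hh.symm)
      have step2 : ∑ f : Fin m → Fin n, ∏ y, N y (f y) = M a x * 𝒞 ^ (m - 1) := by
        rw [← Fintype.prod_sum N]
        have hx : ∀ y : Fin m, (∑ b, N y b) = if y = x then M a x else 𝒞 := by
          intro y
          by_cases hy : y = x
          · subst hy
            simp [hN]
          · simp [hN, hy, hsum]
        calc ∏ y, ∑ b, N y b = ∏ y, (if y = x then M a x else 𝒞) := by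
              exact Finset.prod_congr rfl fun y _ => hx y
          _ = M a x * ∏ y ∈ Finset.univ.erase x, (if y = x then M a x else 𝒞) := by
              rw [← Finset.mul_prod_erase _ _ (Finset.mem_univ x), if_pos rfl]
          _ = M a x * 𝒞 ^ (m - 1) := by
              congr 1
              rw [Finset.prod_congr rfl (fun y hy => if_neg (Finset.ne_of_mem_erase hy)),
                Finset.prod_const, Finset.card_erase_of_mem (Finset.mem_univ x)]
              simp
      have : ∑ f : Fin m → Fin n, (if a = f x then (∏ y, M (f y) y) / 𝒞 ^ (m - 1) else 0)
          = (∑ f : Fin m → Fin n, (if a = f x then ∏ y, M (f y) y else 0)) / 𝒞 ^ (m - 1) := by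
        rw [Finset.sum_div]
        apply Finset.sum_congr rfl
        intro f _
        by_cases h : a = f x <;> simp [h]
      rw [this]
      rw [Finset.sum_congr rfl (fun f _ => step1 f), step2, mul_div_assoc,
        div_self hCne, mul_one]
end

section
/- Every real n×m matrix M with constant column sums 𝒞 (entries allowed to be negative) admits a decomposition M_{a,x} = Σ_{f : Fin m → Fin n} δ_{a, f(x)} C_f with real coefficients satisfying Σ_f C_f = 𝒞. -/
open Finset

lemma sum_eval {S T : Type*} [Fintype S] [Fintype T] [DecidableEq S] (j : S) (g : T → ℝ) :
    ∑ r : S → T, g (r j) = (Fintype.card T : ℝ) ^ (Fintype.card S - 1) * ∑ t, g t := by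
  rw [← Equiv.sum_comp (Equiv.funSplitAt j T).symm (fun r => g (r j))]
  simp only [Fintype.sum_prod_type, Equiv.funSplitAt_symm_apply, dif_pos rfl]
  rw [Finset.sum_comm]
  simp [Finset.sum_const, Fintype.card_fun, Fintype.card_subtype_compl,
    Fintype.card_subtype_eq, mul_comm]

/-- every real `n × m` matrix with constant column sums `𝒞` (entries
possibly negative) decomposes over the deterministic matrices `δ_{a, f x}` with real
coefficients summing to `𝒞`. -/
theorem stmt2 (n m : ℕ) (hn : 2 ≤ n) (hm : 1 ≤ m)
    (M : Fin n → Fin m → ℝ)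
    (𝒞 : ℝ) (hsum : ∀ x, ∑ a, M a x = 𝒞) :
    ∃ C : (Fin m → Fin n) → ℝ,
      (∑ f : Fin m → Fin n, C f) = 𝒞 ∧
      (∀ a x, M a x = ∑ f : Fin m → Fin n, (if a = f x then C f else 0)) := by
  have hn0 : (n : ℝ) ≠ 0 := by
    have : 0 < n := by omega
    exact_mod_cast this.ne'
  have hpow : ((n : ℝ) ^ (m - 1)) ≠ 0 := pow_ne_zero _ hn0
  refine ⟨fun f => (∑ x, M (f x) x - (m - 1 : ℕ) * 𝒞 / n) / n ^ (m - 1), ?_, ?_⟩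
  · have h1 : ∑ f : Fin m → Fin n, ∑ x, M (f x) x = m * (n:ℝ) ^ (m-1) * 𝒞 := by
      rw [Finset.sum_comm]
      have : ∀ x : Fin m, ∑ f : Fin m → Fin n, M (f x) x
          = (n:ℝ) ^ (m-1) * 𝒞 := by
        intro x
        have := sum_eval (T := Fin n) x (fun b => M b x)
        simpa [Fintype.card_fin, hsum x] using this
      simp [this]
      ring
    rw [← Finset.sum_div, Finset.sum_sub_distrib, h1, Finset.sum_const]
    simp only [card_univ, Fintype.card_fun, Fintype.card_fin, nsmul_eq_mul]
    have hnm : ((n:ℝ) ^ m) = n * n ^ (m - 1) := by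
      rw [← pow_succ']
      congr 1
      omega
    field_simp
    rw [Nat.cast_pow, hnm, Nat.cast_sub hm, Nat.cast_one]
    ring
  · intro a x0
    -- reduce sum over all f to sum over fiber f x0 = a
    rw [← Equiv.sum_comp (Equiv.funSplitAt x0 (Fin n)).symm]
    simp only [Fintype.sum_prod_type, Equiv.funSplitAt_symm_apply]
    rw [Finset.sum_comm]
    simp only [dite_true]
    have key : ∀ r : {j // j ≠ x0} → Fin n,
        ∑ b : Fin n, (if a = b then
          ((∑ x, M (if h : x = x0 then b else r ⟨x, h⟩) x) - (m - 1 : ℕ) * 𝒞 / n) / n ^ (m-1)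
          else 0)
        = ((∑ x, M (if h : x = x0 then a else r ⟨x, h⟩) x) - (m - 1 : ℕ) * 𝒞 / n) / n ^ (m-1) := by
      intro r
      rw [Finset.sum_ite_eq]
      simp
    rw [Finset.sum_congr rfl (fun r _ => key r)]
    rw [← Finset.sum_div, Finset.sum_sub_distrib]
    have hsplit : ∀ r : {j // j ≠ x0} → Fin n,
        ∑ x, M (if h : x = x0 then a else r ⟨x, h⟩) x
        = M a x0 + ∑ x ∈ univ \ {x0}, M (if h : x = x0 then a else r ⟨x, h⟩) x := by
      intro r
      rw [Finset.sum_eq_sum_sdiff_singleton_add (mem_univ x0), dif_pos rfl, add_comm]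
    rw [Finset.sum_congr rfl (fun r _ => hsplit r)]
    rw [Finset.sum_add_distrib, Finset.sum_const]
    rw [Finset.sum_comm]
    have inner : ∀ x ∈ univ \ {x0},
        ∑ r : {j // j ≠ x0} → Fin n, M (if h : x = x0 then a else r ⟨x, h⟩) x
        = (n:ℝ) ^ (m - 2) * 𝒞 := by
      intro x hx
      have hx' : x ≠ x0 := by simpa using hx
      have := sum_eval (S := {j // j ≠ x0}) (T := Fin n) ⟨x, hx'⟩ (fun b => M b x)
      have hcard : Fintype.card {j : Fin m // j ≠ x0} = m - 1 := by
        simp [Fintype.card_subtype_compl, Fintype.card_subtype_eq]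
      rw [hcard] at this
      have he : m - 1 - 1 = m - 2 := by omega
      rw [he] at this
      simp only [dif_neg hx']
      rw [this, hsum x, Fintype.card_fin]
    rw [Finset.sum_congr rfl inner, Finset.sum_const]
    have hcardfib : (Finset.univ : Finset ({j : Fin m // j ≠ x0} → Fin n)).card = n ^ (m-1) := by
      simp [card_univ, Fintype.card_fun, Fintype.card_subtype_compl, Fintype.card_subtype_eq]
    have hcarddiff : (univ \ {x0} : Finset (Fin m)).card = m - 1 := by
      simp [Finset.card_sdiff]
    rw [hcardfib, hcarddiff]
    simp only [nsmul_eq_mul]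
    have h2 : ((m:ℝ) - 1) = ((m - 1 : ℕ) : ℝ) := by
      push_cast [Nat.cast_sub hm]; ring
    rcases Nat.lt_or_ge m 2 with hm2 | hm2
    · -- m = 1
      interval_cases m
      simp
    · have hpw : (n:ℝ) ^ (m-1) = n * n ^ (m-2) := by
        rw [← pow_succ']
        congr 1
        omega
      simp only [Finset.sum_const, hcardfib, nsmul_eq_mul, Nat.cast_pow]
      field_simp
      rw [hpw]
      ring
end

section
/- Every no-signalling bipartite behavior P(ab|xy) admits a quasi-probability hidden variable model: there exist real coefficients q_{f,g} with Σ_{f,g} q_{f,g} = 1 such that P(ab|xy) = Σ_{f,g} δ_{a,f(x)} δ_{b,g(y)} q_{f,g}. -/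
lemma stmt9_keyAux {m n : ℕ} (F : Fin m → Fin n → ℝ) (x : Fin m) (a : Fin n) :
    ∑ f : Fin m → Fin n, (if a = f x then ∏ x', F x' (f x') else 0)
      = F x a * ∏ x' ∈ Finset.univ.erase x, ∑ c, F x' c := by
  set H : Fin m → Fin n → ℝ :=
    fun x' c => if x' = x then (if a = c then F x' c else 0) else F x' c with hH
  have h1 : ∀ f : Fin m → Fin n,
      (if a = f x then ∏ x', F x' (f x') else 0) = ∏ x', H x' (f x') := by
    intro f
    by_cases h : a = f x
    · rw [if_pos h]
      refine Finset.prod_congr rfl fun x' _ => ?_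
      by_cases hx : x' = x
      · subst hx; simp [hH, ← h]
      · simp [hH, hx]
    · rw [if_neg h]
      refine (Finset.prod_eq_zero (Finset.mem_univ x) ?_).symm
      simp [hH, h]
  simp only [h1]
  have h2 : (∑ f : Fin m → Fin n, ∏ x', H x' (f x')) = ∏ x', ∑ c, H x' c := by
    rw [Finset.prod_univ_sum, Fintype.piFinset_univ]
  rw [h2, ← Finset.mul_prod_erase Finset.univ _ (Finset.mem_univ x)]
  congr 1
  · simp [hH]
  · refine Finset.prod_congr rfl fun x' hx' => ?_
    refine Finset.sum_congr rfl fun c _ => ?_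
    simp [hH, Finset.ne_of_mem_erase hx']

lemma stmt9_L2 {m n : ℕ} (F : Fin m → Fin n → ℝ) (h1 : ∀ x', ∑ c, F x' c = 1)
    (x : Fin m) (a : Fin n) :
    ∑ f : Fin m → Fin n, (if a = f x then ∏ x', F x' (f x') else 0) = F x a := by
  rw [stmt9_keyAux]
  simp [h1]

lemma stmt9_L3 {m n : ℕ} (W : Fin n → ℝ) (x : Fin m) (a : Fin n) :
    ∑ f : Fin m → Fin n, (if a = f x then W (f x) else 0)
      = (n : ℝ) ^ (m - 1) * W a := by
  have h := stmt9_keyAux (fun x' c => if x' = x then W c else 1) x a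
  have h2 : ∀ f : Fin m → Fin n,
      (∏ x', if x' = x then W (f x') else 1) = W (f x) := by
    intro f
    rw [Finset.prod_ite_eq' Finset.univ x (fun x' => W (f x'))]
    simp
  simp only [h2] at h
  rw [h]
  have h3 : ∀ x' ∈ Finset.univ.erase x,
      (∑ c : Fin n, if x' = x then W c else 1) = (n : ℝ) := by
    intro x' hx'
    simp [Finset.ne_of_mem_erase hx']
  rw [Finset.prod_congr rfl h3, Finset.prod_const,
    Finset.card_erase_of_mem (Finset.mem_univ x)]
  simp [mul_comm]

lemma stmt9_L4 {m n : ℕ} (W : Fin n → ℝ) (x x'' : Fin m) (hx : x'' ≠ x)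
    (hW : ∑ c, W c = 0) (a : Fin n) :
    ∑ f : Fin m → Fin n, (if a = f x then W (f x'') else 0) = 0 := by
  have h := stmt9_keyAux (fun x' c => if x' = x'' then W c else 1) x a
  have h2 : ∀ f : Fin m → Fin n,
      (∏ x', if x' = x'' then W (f x') else 1) = W (f x'') := by
    intro f
    rw [Finset.prod_ite_eq' Finset.univ x'' (fun x' => W (f x'))]
    simp
  simp only [h2] at h
  rw [h]
  apply mul_eq_zero_of_right
  refine Finset.prod_eq_zero (Finset.mem_erase.mpr ⟨hx, Finset.mem_univ x''⟩) ?_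
  simp [hW]

lemma stmt9_sum4 {α β : Type*} [Fintype α] [Fintype β] (T : α → α → β → β → ℝ) :
    ∑ a : α, ∑ b : α, ∑ f : β, ∑ g : β, T a b f g
      = ∑ f : β, ∑ g : β, ∑ a : α, ∑ b : α, T a b f g := by
  have s1 : ∑ a : α, ∑ b : α, ∑ f : β, ∑ g : β, T a b f g
      = ∑ a : α, ∑ f : β, ∑ b : α, ∑ g : β, T a b f g := by
    refine Finset.sum_congr rfl fun a _ => ?_
    exact Finset.sum_comm
  have s2 : ∑ a : α, ∑ f : β, ∑ b : α, ∑ g : β, T a b f g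
      = ∑ f : β, ∑ a : α, ∑ b : α, ∑ g : β, T a b f g := Finset.sum_comm
  have s3 : ∑ f : β, ∑ a : α, ∑ b : α, ∑ g : β, T a b f g
      = ∑ f : β, ∑ a : α, ∑ g : β, ∑ b : α, T a b f g := by
    refine Finset.sum_congr rfl fun f _ => ?_
    refine Finset.sum_congr rfl fun a _ => ?_
    exact Finset.sum_comm
  have s4 : ∑ f : β, ∑ a : α, ∑ g : β, ∑ b : α, T a b f g
      = ∑ f : β, ∑ g : β, ∑ a : α, ∑ b : α, T a b f g := by
    refine Finset.sum_congr rfl fun f _ => ?_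
    exact Finset.sum_comm
  rw [s1, s2, s3, s4]

/-- every no-signalling behavior admits a quasi-probability hidden
variable model. -/
theorem stmt9 (n m : ℕ) (hn : 1 ≤ n) (hm : 1 ≤ m)
    (P : Fin n → Fin n → Fin m → Fin m → ℝ)
    (hpos : ∀ a b x y, 0 ≤ P a b x y)
    (hnorm : ∀ x y, ∑ a, ∑ b, P a b x y = 1)
    (hnsA : ∀ b x x' y, ∑ a, P a b x y = ∑ a, P a b x' y)
    (hnsB : ∀ a x y y', ∑ b, P a b x y = ∑ b, P a b x y') :
    ∃ q : (Fin m → Fin n) → (Fin m → Fin n) → ℝ,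
      (∑ f : Fin m → Fin n, ∑ g : Fin m → Fin n, q f g = 1) ∧
      (∀ a b x y, P a b x y =
        ∑ f : Fin m → Fin n, ∑ g : Fin m → Fin n,
          (if a = f x ∧ b = g y then q f g else 0)) := by
  set x0 : Fin m := ⟨0, hm⟩ with hx0
  set PA : Fin n → Fin m → ℝ := fun a x => ∑ b, P a b x x0 with hPAdef
  set PB : Fin n → Fin m → ℝ := fun b y => ∑ a, P a b x0 y with hPBdef
  have hPAsum : ∀ x, ∑ a, PA a x = 1 := fun x => hnorm x x0
  have hPBsum : ∀ y, ∑ b, PB b y = 1 := by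
    intro y
    rw [← hnorm x0 y]
    exact Finset.sum_comm.symm
  have hPA : ∀ a x y, ∑ b, P a b x y = PA a x := fun a x y => hnsB a x y x0
  have hPB : ∀ b x y, ∑ a, P a b x y = PB b y := fun b x y => hnsA b x x0 y
  set C : Fin n → Fin n → Fin m → Fin m → ℝ :=
    fun a b x y => P a b x y - PA a x * PB b y with hCdef
  have hCa : ∀ b x y, ∑ a, C a b x y = 0 := by
    intro b x y
    simp only [hCdef]
    rw [Finset.sum_sub_distrib, hPB b x y, ← Finset.sum_mul, hPAsum x, one_mul,
      sub_self]
  have hCb : ∀ a x y, ∑ b, C a b x y = 0 := by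
    intro a x y
    simp only [hCdef]
    rw [Finset.sum_sub_distrib, hPA a x y, ← Finset.mul_sum, hPBsum y, mul_one,
      sub_self]
  set cst : ℝ := ((n : ℝ) ^ (m - 1))⁻¹ with hcstdef
  have hn0 : (n : ℝ) ^ (m - 1) ≠ 0 := by
    apply pow_ne_zero
    positivity
  have hcst : cst * (n : ℝ) ^ (m - 1) = 1 := inv_mul_cancel₀ hn0
  set q : (Fin m → Fin n) → (Fin m → Fin n) → ℝ := fun f g =>
    (∏ x', PA (f x') x') * (∏ y', PB (g y') y')
      + cst ^ 2 * ∑ x'', ∑ y'', C (f x'') (g y'') x'' y'' with hqdef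
  have hrep : ∀ a b x y, P a b x y =
      ∑ f : Fin m → Fin n, ∑ g : Fin m → Fin n,
        (if a = f x ∧ b = g y then q f g else 0) := by
    intro a b x y
    have hg : ∀ f : Fin m → Fin n,
        (∑ g : Fin m → Fin n, if b = g y then q f g else 0)
          = (∏ x', PA (f x') x') * PB b y
            + cst ^ 2 * ∑ x'', (n : ℝ) ^ (m - 1) * C (f x'') b x'' y := by
      intro f
      have e1 : ∀ g : Fin m → Fin n, (if b = g y then q f g else 0)
          = (∏ x', PA (f x') x') * (if b = g y then ∏ y', PB (g y') y' else 0)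
            + cst ^ 2 * ∑ x'', ∑ y'',
              (if b = g y then C (f x'') (g y'') x'' y'' else 0) := by
        intro g
        by_cases hb : b = g y <;> simp [hqdef, hb, Finset.mul_sum]
      simp only [e1, Finset.sum_add_distrib, ← Finset.mul_sum]
      congr 1
      · congr 1
        exact stmt9_L2 (fun y' c => PB c y') hPBsum y b
      · congr 1
        have swap1 : (∑ g : Fin m → Fin n, ∑ x'', ∑ y'',
              (if b = g y then C (f x'') (g y'') x'' y'' else 0))
            = ∑ x'', ∑ y'', ∑ g : Fin m → Fin n,
              (if b = g y then C (f x'') (g y'') x'' y'' else 0) := by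
          rw [Finset.sum_comm]
          refine Finset.sum_congr rfl fun x'' _ => ?_
          exact Finset.sum_comm
        rw [swap1, Finset.mul_sum]
        refine Finset.sum_congr rfl fun x'' _ => ?_
        rw [Finset.sum_eq_single y
          (fun y'' _ hy'' => stmt9_L4 (fun b'' => C (f x'') b'' x'' y'') y y'' hy''
            (hCb (f x'') x'' y'') b)
          (fun hy => absurd (Finset.mem_univ y) hy)]
        exact stmt9_L3 (fun b'' => C (f x'') b'' x'' y) y b
    have e0 : ∀ f : Fin m → Fin n, (∑ g : Fin m → Fin n,
        if a = f x ∧ b = g y then q f g else 0)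
        = if a = f x then (∑ g : Fin m → Fin n,
            if b = g y then q f g else 0) else 0 := by
      intro f
      by_cases ha : a = f x <;> simp [ha]
    simp only [e0, hg]
    have e3 : ∀ f : Fin m → Fin n,
        (if a = f x then (∏ x', PA (f x') x') * PB b y
            + cst ^ 2 * ∑ x'', (n : ℝ) ^ (m - 1) * C (f x'') b x'' y else 0)
        = PB b y * (if a = f x then ∏ x', PA (f x') x' else 0)
          + cst ^ 2 * ∑ x'', (n : ℝ) ^ (m - 1) *
              (if a = f x then C (f x'') b x'' y else 0) := by
      intro f
      by_cases ha : a = f x <;> simp [ha, mul_comm, Finset.mul_sum]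
    simp only [e3]
    rw [Finset.sum_add_distrib, ← Finset.mul_sum, ← Finset.mul_sum]
    rw [stmt9_L2 (fun x' c => PA c x') hPAsum x a]
    have swap2 : (∑ f : Fin m → Fin n, ∑ x'', (n : ℝ) ^ (m - 1) *
          (if a = f x then C (f x'') b x'' y else 0))
        = ∑ x'', (n : ℝ) ^ (m - 1) * ∑ f : Fin m → Fin n,
          (if a = f x then C (f x'') b x'' y else 0) := by
      rw [Finset.sum_comm]
      refine Finset.sum_congr rfl fun x'' _ => ?_
      exact (Finset.mul_sum _ _ _).symm
    rw [swap2, Finset.sum_eq_single x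
      (fun x'' _ hx'' => by
        rw [stmt9_L4 (fun a'' => C a'' b x'' y) x x'' hx'' (hCa b x'' y) a, mul_zero])
      (fun hx => absurd (Finset.mem_univ x) hx),
      stmt9_L3 (fun a'' => C a'' b x y) x a]
    have hc2 : cst ^ 2 * ((n : ℝ) ^ (m - 1) * ((n : ℝ) ^ (m - 1) * C a b x y))
        = (cst * (n : ℝ) ^ (m - 1)) * ((cst * (n : ℝ) ^ (m - 1)) * C a b x y) := by
      ring
    rw [hc2, hcst, one_mul, one_mul]
    simp only [hCdef]
    ring
  refine ⟨q, ?_, hrep⟩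
  have h1 := hnorm x0 x0
  rw [Finset.sum_congr rfl fun a (_ : a ∈ Finset.univ) =>
    Finset.sum_congr rfl fun b (_ : b ∈ Finset.univ) => hrep a b x0 x0] at h1
  rw [stmt9_sum4 (fun a b f g => if a = f x0 ∧ b = g x0 then q f g else 0)] at h1
  rw [← h1]
  refine Finset.sum_congr rfl fun f _ => ?_
  refine Finset.sum_congr rfl fun g _ => ?_
  have e4 : ∀ a : Fin n, (∑ b : Fin n, if a = f x0 ∧ b = g x0 then q f g else 0)
      = if a = f x0 then q f g else 0 := by
    intro a
    by_cases ha : a = f x0 <;> simp [ha]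
  simp only [e4]
  simp
end

section
/- A behavior P(ab|xy) is local (admits a nonneg hidden variable model P(ab|xy) = Σ_λ P(a|x,λ)P(b|y,λ)p(λ) with p a probability distribution and P(·|·,λ) conditional probabilities) if and only if it admits a deterministic decomposition P(ab|xy) = Σ_{f,g} δ_{a,f(x)} δ_{b,g(y)} q_{f,g} with q_{f,g} ≥ 0 and Σ q = 1. -/
/-- Sum over all functions of a product factorizes. -/
lemma sumProd {m n : ℕ} (h : Fin m → Fin n → ℝ) (hs : ∀ x, ∑ a, h x a = 1) :
    ∑ f : Fin m → Fin n, ∏ x, h x (f x) = 1 := by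
  have := Finset.prod_univ_sum (fun _ : Fin m => (Finset.univ : Finset (Fin n)))
    (fun x a => h x a)
  rw [Fintype.piFinset_univ] at this
  rw [← this]
  simp [hs]

lemma sumProdIte {m n : ℕ} (h : Fin m → Fin n → ℝ) (hs : ∀ x, ∑ a, h x a = 1)
    (x₀ : Fin m) (a₀ : Fin n) :
    ∑ f : Fin m → Fin n, (if a₀ = f x₀ then ∏ x, h x (f x) else 0) = h x₀ a₀ := by
  have key : ∀ f : Fin m → Fin n,
      (if a₀ = f x₀ then ∏ x, h x (f x) else 0)
      = ∏ x, (if x = x₀ then (if f x = a₀ then h x (f x) else 0) else h x (f x)) := by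
    intro f
    rcases eq_or_ne a₀ (f x₀) with hfa | hfa
    · rw [if_pos hfa]
      apply Finset.prod_congr rfl
      intro x _
      split_ifs with h1 h2
      · rfl
      · exact absurd (h1 ▸ hfa.symm) h2
      · rfl
    · rw [if_neg hfa]
      symm
      apply Finset.prod_eq_zero (Finset.mem_univ x₀)
      simp [Ne.symm hfa]
  rw [Finset.sum_congr rfl fun f _ => key f]
  have := Finset.prod_univ_sum (fun _ : Fin m => (Finset.univ : Finset (Fin n)))
    (fun x a => if x = x₀ then (if a = a₀ then h x a else 0) else h x a)
  rw [Fintype.piFinset_univ] at this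
  rw [← this]
  have hx : ∀ x : Fin m,
      (∑ a, if x = x₀ then (if a = a₀ then h x a else 0) else h x a)
      = if x = x₀ then h x a₀ else 1 := by
    intro x
    rcases eq_or_ne x x₀ with hx | hx
    · simp [hx]
    · simp [hx, hs]
  rw [Finset.prod_congr rfl fun x _ => hx x]
  simp

/-- a behavior is local (admits a hidden variable model with
probability weights and local response distributions) iff it admits a deterministic
decomposition with a genuine (nonnegative) probability `q` over pairs of functions. -/
theorem stmt10 (n m : ℕ)
    (P : Fin n → Fin n → Fin m → Fin m → ℝ) :
    (∃ (k : ℕ) (p : Fin k → ℝ) (A B : Fin k → Fin m → Fin n → ℝ),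
      (∀ l, 0 ≤ p l) ∧ (∑ l, p l = 1) ∧
      (∀ l x a, 0 ≤ A l x a) ∧ (∀ l x, ∑ a, A l x a = 1) ∧
      (∀ l y b, 0 ≤ B l y b) ∧ (∀ l y, ∑ b, B l y b = 1) ∧
      (∀ a b x y, P a b x y = ∑ l, p l * A l x a * B l y b)) ↔
    (∃ q : (Fin m → Fin n) → (Fin m → Fin n) → ℝ,
      (∀ f g, 0 ≤ q f g) ∧
      (∑ f : Fin m → Fin n, ∑ g : Fin m → Fin n, q f g = 1) ∧
      (∀ a b x y, P a b x y =
        ∑ f : Fin m → Fin n, ∑ g : Fin m → Fin n,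
          (if a = f x ∧ b = g y then q f g else 0))) := by
  constructor
  · rintro ⟨k, p, A, B, hp, hps, hA, hAs, hB, hBs, hP⟩
    refine ⟨fun f g => ∑ l, p l * (∏ x, A l x (f x)) * (∏ y, B l y (g y)), ?_, ?_, ?_⟩
    · intro f g
      apply Finset.sum_nonneg
      intro l _
      have h1 : 0 ≤ ∏ x, A l x (f x) := Finset.prod_nonneg fun x _ => hA l x (f x)
      have h2 : 0 ≤ ∏ y, B l y (g y) := Finset.prod_nonneg fun y _ => hB l y (g y)
      exact mul_nonneg (mul_nonneg (hp l) h1) h2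
    · have : ∀ f : Fin m → Fin n, ∑ g : Fin m → Fin n,
          (∑ l, p l * (∏ x, A l x (f x)) * (∏ y, B l y (g y)))
          = ∑ l, p l * (∏ x, A l x (f x)) := by
        intro f
        rw [Finset.sum_comm]
        apply Finset.sum_congr rfl
        intro l _
        rw [← Finset.mul_sum, sumProd (fun y b => B l y b) (hBs l), mul_one]
      rw [Finset.sum_congr rfl fun f _ => this f, Finset.sum_comm]
      rw [Finset.sum_congr rfl (fun l (_ : l ∈ Finset.univ) => by
        rw [← Finset.mul_sum, sumProd (fun x a => A l x a) (hAs l), mul_one])]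
      exact hps
    · intro a b x y
      rw [hP a b x y]
      have key : ∀ (f g : Fin m → Fin n),
          (if a = f x ∧ b = g y then
            ∑ l, p l * (∏ x', A l x' (f x')) * (∏ y', B l y' (g y')) else 0)
          = ∑ l, p l * (if a = f x then ∏ x', A l x' (f x') else 0)
              * (if b = g y then ∏ y', B l y' (g y') else 0) := by
        intro f g
        by_cases h1 : a = f x <;> by_cases h2 : b = g y <;>
          simp [h1, h2, mul_assoc]
      rw [Finset.sum_congr rfl fun f _ => Finset.sum_congr rfl fun g _ => key f g]
      rw [Finset.sum_congr rfl fun f (_ : f ∈ Finset.univ) => Finset.sum_comm,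
        Finset.sum_comm]
      apply Finset.sum_congr rfl
      intro l _
      symm
      have e1 := sumProdIte (fun x' a' => A l x' a') (hAs l) x a
      have e2 := sumProdIte (fun y' b' => B l y' b') (hBs l) y b
      calc ∑ f : Fin m → Fin n, ∑ g : Fin m → Fin n,
            p l * (if a = f x then ∏ x', A l x' (f x') else 0)
              * (if b = g y then ∏ y', B l y' (g y') else 0)
          = ∑ f : Fin m → Fin n,
              p l * (if a = f x then ∏ x', A l x' (f x') else 0) * B l y b := by
            apply Finset.sum_congr rfl
            intro f _
            rw [← Finset.mul_sum, e2]
        _ = p l * A l x a * B l y b := by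
            rw [← Finset.sum_mul, ← Finset.mul_sum, e1]
  · rintro ⟨q, hq, hqs, hP⟩
    set k := Fintype.card ((Fin m → Fin n) × (Fin m → Fin n)) with hk
    let e : Fin k ≃ (Fin m → Fin n) × (Fin m → Fin n) :=
      (Fintype.equivFin _).symm
    refine ⟨k, fun l => q (e l).1 (e l).2,
      fun l x a => if a = (e l).1 x then 1 else 0,
      fun l y b => if b = (e l).2 y then 1 else 0,
      fun l => hq _ _, ?_, ?_, ?_, ?_, ?_, ?_⟩
    · rw [← hqs, ← Finset.sum_product']
      exact Fintype.sum_equiv e _ _ fun l => rfl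
    · intro l x a; positivity
    · intro l x; simp
    · intro l y b; positivity
    · intro l y; simp
    · intro a b x y
      rw [hP a b x y, ← Finset.sum_product']
      refine (Fintype.sum_equiv e _ _ fun l => ?_).symm
      by_cases h1 : a = (e l).1 x <;> by_cases h2 : b = (e l).2 y <;>
        simp [h1, h2]
end

section
/- The PR box is non-local: there is no nonnegative q : (Fin 2 → Fin 2) → (Fin 2 → Fin 2) → ℝ with Σ q = 1 such that (1/2)·δ_{a⊕b,xy} = Σ_{f,g} δ_{a,f(x)} δ_{b,g(y)} q_{f,g}. -/
lemma pr_det_fail (f g : ZMod 2 → ZMod 2) : ∃ x y : ZMod 2, f x + g y ≠ x * y := by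
  revert f g; decide

/-- the PR box is non-local: it admits no deterministic hidden variable
model with nonnegative weights. -/
theorem stmt13 :
    ¬ ∃ q : (ZMod 2 → ZMod 2) → (ZMod 2 → ZMod 2) → ℝ,
      (∀ f g, 0 ≤ q f g) ∧
      (∑ f : ZMod 2 → ZMod 2, ∑ g : ZMod 2 → ZMod 2, q f g = 1) ∧
      (∀ a b x y : ZMod 2,
        (if a + b = x * y then (1 / 2 : ℝ) else 0) =
          ∑ f : ZMod 2 → ZMod 2, ∑ g : ZMod 2 → ZMod 2,
            (if a = f x ∧ b = g y then q f g else 0)) := by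
  rintro ⟨q, hq, hsum, hP⟩
  have hz : ∀ f g, q f g = 0 := by
    intro f g
    obtain ⟨x, y, hxy⟩ := pr_det_fail f g
    have h := hP (f x) (g y) x y
    rw [if_neg hxy] at h
    have hnn : ∀ f' ∈ (Finset.univ : Finset (ZMod 2 → ZMod 2)),
        0 ≤ ∑ g' : ZMod 2 → ZMod 2, (if f x = f' x ∧ g y = g' y then q f' g' else 0) := by
      intro f' _
      exact Finset.sum_nonneg fun g' _ => by split_ifs; exacts [hq f' g', le_rfl]
    have h1 : ∑ g' : ZMod 2 → ZMod 2, (if f x = f x ∧ g y = g' y then q f g' else 0) = 0 := by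
      have := (Finset.sum_eq_zero_iff_of_nonneg hnn).mp h.symm f (Finset.mem_univ f)
      exact this
    have hnn2 : ∀ g' ∈ (Finset.univ : Finset (ZMod 2 → ZMod 2)),
        0 ≤ (if f x = f x ∧ g y = g' y then q f g' else 0) := by
      intro g' _; split_ifs; exacts [hq f g', le_rfl]
    have := (Finset.sum_eq_zero_iff_of_nonneg hnn2).mp h1 g (Finset.mem_univ g)
    simpa using this
  rw [Finset.sum_congr rfl (fun f _ => Finset.sum_eq_zero (fun g _ => hz f g))] at hsum
  simp at hsum
end

section
/- With U, S, V defined by U_{(a,x),(a',x')} = R_{a,a'} 𝓡^{a'}_{x,x'}, S_{(a,x),(a_1,…,a_m)} = √(n^{m−1})·[√m·δ_{0,a}δ_{1,x} + 1 − δ_{0,a}]·δ_{a,a_x}·Π_{y≠x} δ_{0,a_y}, and V = R ⊗ ⋯ ⊗ R (m factors), one has the exact factorization δ_{a,a_x} = Σ_{a',x'} Σ_{a'_1…a'_m} U_{(a,x),(a',x')} S_{(a',x'),(a'_1…a'_m)} V_{(a_1…a_m),(a'_1…a'_m)}, where R is the correlation-basis rotation (with n replaced by m in 𝓡) and 𝓡^{a}_{x,y}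 = δ_{0,a} R_{x,y} + (1−δ_{0,a}) δ_{x,y}. -/
/-- The correlation-basis rotation matrix `R` on `Fin k`. -/
noncomputable def corrR (k : ℕ) (a b : Fin k) : ℝ :=
  if b.val = 0 then 1 / Real.sqrt k
  else if a.val < b.val then 1 / Real.sqrt (b.val * (b.val + 1))
  else if a = b then -(b.val : ℝ) / Real.sqrt (b.val * (b.val + 1))
  else 0

/-- The controlled rotation `𝓡`: rotates by `R` when the control is `0`, otherwise
acts as the identity. -/
noncomputable def ctrlR (n m : ℕ) (a : Fin n) (x y : Fin m) : ℝ :=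
  if a.val = 0 then corrR m x y else (if x = y then 1 else 0)

/-- The left singular-vector matrix `U` of the deterministic tensor. -/
noncomputable def Umat (n m : ℕ) (p p' : Fin n × Fin m) : ℝ :=
  corrR n p.1 p'.1 * ctrlR n m p'.1 p.2 p'.2

/-- The quasi-diagonal singular-value matrix `S` of the deterministic tensor. -/
noncomputable def Smat (n m : ℕ) (p : Fin n × Fin m) (avec : Fin m → Fin n) : ℝ :=
  Real.sqrt ((n : ℝ) ^ (m - 1)) *
    ((if p.1.val = 0 ∧ p.2.val = 0 then Real.sqrt m else 0)
      + 1 - (if p.1.val = 0 then 1 else 0)) *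
    (if p.1 = avec p.2 then 1 else 0) *
    ∏ y ∈ Finset.univ.erase p.2, (if (avec y).val = 0 then 1 else 0)

/-- The right singular-vector matrix `V = R ⊗ ⋯ ⊗ R` (`m` factors). -/
noncomputable def Vmat (n m : ℕ) (avec avec' : Fin m → Fin n) : ℝ :=
  ∏ i, corrR n (avec i) (avec' i)

lemma sum_fin_split (k c : ℕ) (hc : c < k) (t u : ℝ) :
    ∑ a : Fin k, (if a.val < c then t else if a.val = c then u else 0) = c * t + u := by
  rw [Fin.sum_univ_eq_sum_range (fun i => if i < c then t else if i = c then u else 0)]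
  rw [← Finset.sum_subset (Finset.range_subset_range.2 hc) (by
    intro i _ hi
    simp only [Finset.mem_range, not_lt] at hi
    have h1 : ¬ i < c := by omega
    have h2 : ¬ i = c := by omega
    simp [h1, h2])]
  rw [Finset.sum_range_succ]
  simp only [lt_irrefl, if_false, if_pos rfl]
  congr 1
  have : ∀ i ∈ Finset.range c, (if i < c then t else if i = c then u else 0) = t := by
    intro i hi; simp [Finset.mem_range.1 hi]
  rw [Finset.sum_congr rfl this, Finset.sum_const, Finset.card_range, nsmul_eq_mul]

lemma sqrtd_pos (c : ℕ) (hc : 0 < c) : (0:ℝ) < Real.sqrt ((c:ℝ) * ((c:ℝ) + 1)) := by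
  apply Real.sqrt_pos.2; positivity

lemma sqrtd_sq (c : ℕ) :
    Real.sqrt ((c:ℝ) * ((c:ℝ) + 1)) * Real.sqrt ((c:ℝ) * ((c:ℝ) + 1)) = (c:ℝ) * ((c:ℝ) + 1) := by
  apply Real.mul_self_sqrt; positivity

lemma col_ortho_le (k : ℕ) (b b' : Fin k) (h : b.val ≤ b'.val) :
    ∑ a : Fin k, corrR k a b * corrR k a b' = if b = b' then 1 else 0 := by
  have hk : 0 < k := b.pos
  have hks : (0:ℝ) < Real.sqrt k := Real.sqrt_pos.2 (by exact_mod_cast hk)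
  by_cases hb' : b'.val = 0
  · have hb : b.val = 0 := by omega
    have hbb : b = b' := Fin.ext (by omega)
    have key : ∀ a : Fin k, corrR k a b * corrR k a b' = 1 / (k:ℝ) := by
      intro a
      simp only [corrR, hb, hb', if_pos]
      rw [div_mul_div_comm, one_mul, Real.mul_self_sqrt (by positivity)]
    rw [Finset.sum_congr rfl (fun a _ => key a), Finset.sum_const, Finset.card_univ,
      Fintype.card_fin, nsmul_eq_mul, if_pos hbb]
    field_simp
  · set c' := b'.val with hc'
    have hc'p : 0 < c' := Nat.pos_of_ne_zero hb'
    have hd' : (0:ℝ) < Real.sqrt ((c':ℝ) * ((c':ℝ) + 1)) := sqrtd_pos c' hc'p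
    have hsq' := sqrtd_sq c'
    by_cases hb : b.val = 0
    · have hne : b ≠ b' := by intro e; rw [e] at hb; exact hb' hb
      have key : ∀ a : Fin k, corrR k a b * corrR k a b' =
          if a.val < c' then (1/Real.sqrt k) * (1 / Real.sqrt ((c':ℝ) * ((c':ℝ) + 1)))
          else if a.val = c' then (1/Real.sqrt k) * (-(c':ℝ) / Real.sqrt ((c':ℝ) * ((c':ℝ) + 1)))
          else 0 := by
        intro a
        simp +zetaDelta only [corrR, hb, if_pos, if_neg hb']
        rcases lt_trichotomy a.val c' with hl | he | hg
        · simp +zetaDelta [hl]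
        · have hab : a = b' := Fin.ext he
          subst hab
          simp +zetaDelta [he]
        · have h1 : ¬ a.val < c' := by omega
          have h2 : ¬ a.val = c' := by omega
          have h3 : a ≠ b' := fun e => h2 (by rw [e])
          simp +zetaDelta [h1, h2, h3]
      rw [Finset.sum_congr rfl (fun a _ => key a), sum_fin_split k c' b'.isLt, if_neg hne]
      ring
    · have hcp : 0 < b.val := Nat.pos_of_ne_zero hb
      set c := b.val with hc
      have hd : (0:ℝ) < Real.sqrt ((c:ℝ) * ((c:ℝ) + 1)) := sqrtd_pos c hcp
      have hsq := sqrtd_sq c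
      by_cases hbe : b = b'
      · have key : ∀ a : Fin k, corrR k a b * corrR k a b' =
            if a.val < c then (1 / Real.sqrt ((c:ℝ) * ((c:ℝ) + 1))) * (1 / Real.sqrt ((c:ℝ) * ((c:ℝ) + 1)))
            else if a.val = c then (-(c:ℝ) / Real.sqrt ((c:ℝ) * ((c:ℝ) + 1))) * (-(c:ℝ) / Real.sqrt ((c:ℝ) * ((c:ℝ) + 1)))
            else 0 := by
          intro a
          subst hbe
          simp +zetaDelta only [corrR, if_neg hb]
          rcases lt_trichotomy a.val c with hl | he | hg
          · simp +zetaDelta [hl]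
          · have hab : a = b := Fin.ext he
            subst hab
            simp +zetaDelta [he]
          · have h1 : ¬ a.val < c := by omega
            have h2 : ¬ a.val = c := by omega
            have h3 : a ≠ b := fun e => h2 (by rw [e])
            simp +zetaDelta [h1, h2, h3]
        rw [Finset.sum_congr rfl (fun a _ => key a), sum_fin_split k c b.isLt, if_pos hbe]
        have e1 : (1 / Real.sqrt ((c:ℝ) * ((c:ℝ) + 1))) * (1 / Real.sqrt ((c:ℝ) * ((c:ℝ) + 1)))
            = 1 / ((c:ℝ) * ((c:ℝ) + 1)) := by rw [div_mul_div_comm, one_mul, hsq]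
        have e2 : (-(c:ℝ) / Real.sqrt ((c:ℝ) * ((c:ℝ) + 1))) * (-(c:ℝ) / Real.sqrt ((c:ℝ) * ((c:ℝ) + 1)))
            = ((c:ℝ) * (c:ℝ)) / ((c:ℝ) * ((c:ℝ) + 1)) := by rw [div_mul_div_comm, hsq]; ring_nf
        rw [e1, e2]
        have hcr : (0:ℝ) < (c:ℝ) := by exact_mod_cast hcp
        rw [mul_one_div, ← add_div, div_eq_one_iff_eq (by positivity)]
        ring
      · have hlt : c < c' := lt_of_le_of_ne h (fun e => hbe (Fin.ext e))
        have key : ∀ a : Fin k, corrR k a b * corrR k a b' =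
            if a.val < c then (1 / Real.sqrt ((c:ℝ) * ((c:ℝ) + 1))) * (1 / Real.sqrt ((c':ℝ) * ((c':ℝ) + 1)))
            else if a.val = c then (-(c:ℝ) / Real.sqrt ((c:ℝ) * ((c:ℝ) + 1))) * (1 / Real.sqrt ((c':ℝ) * ((c':ℝ) + 1)))
            else 0 := by
          intro a
          simp +zetaDelta only [corrR, if_neg hb, if_neg hb']
          rcases lt_trichotomy a.val c with hl | he | hg
          · have hl' : a.val < c' := by omega
            simp +zetaDelta [hl, hl']
          · have hab : a = b := Fin.ext he
            rw [if_neg (by omega : ¬ a.val < b.val), if_pos hab,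
              if_pos (by omega : a.val < b'.val),
              if_neg (show ¬ a.val < c by omega), if_pos he]
          · have h1 : ¬ a.val < c := by omega
            have h2 : ¬ a.val = c := by omega
            have h3 : a ≠ b := fun e => h2 (by rw [e])
            simp +zetaDelta [h1, h2, h3]
        rw [Finset.sum_congr rfl (fun a _ => key a), sum_fin_split k c b.isLt, if_neg hbe]
        ring

lemma col_ortho (k : ℕ) (b b' : Fin k) :
    ∑ a : Fin k, corrR k a b * corrR k a b' = if b = b' then 1 else 0 := by
  rcases le_total b.val b'.val with h | h
  · exact col_ortho_le k b b' h
  · rw [Finset.sum_congr rfl (fun a _ => mul_comm (corrR k a b) (corrR k a b')),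
      col_ortho_le k b' b h]
    simp [eq_comm]

lemma row_ortho (k : ℕ) (a b : Fin k) :
    ∑ c : Fin k, corrR k a c * corrR k b c = if a = b then 1 else 0 := by
  let M : Matrix (Fin k) (Fin k) ℝ := Matrix.of (corrR k)
  have h1 : M.transpose * M = 1 := by
    ext u v
    rw [Matrix.mul_apply]
    simp only [Matrix.transpose_apply, Matrix.of_apply, Matrix.one_apply, M]
    exact col_ortho k u v
  have h2 : M * M.transpose = 1 := mul_eq_one_comm.1 h1
  have h3 := congrFun (congrFun h2 a) b
  rw [Matrix.mul_apply] at h3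
  simpa only [Matrix.transpose_apply, Matrix.of_apply, Matrix.one_apply, M] using h3

/-- the special vector supported at `x'` with value `a'`. -/
def evec (n m : ℕ) (hn : 0 < n) (a' : Fin n) (x' : Fin m) : Fin m → Fin n :=
  fun y => if y = x' then a' else ⟨0, hn⟩

lemma ind_lemma (n m : ℕ) (hn : 0 < n) (a' : Fin n) (x' : Fin m) (avec' : Fin m → Fin n) :
    (if a' = avec' x' then (1:ℝ) else 0) *
      ∏ y ∈ Finset.univ.erase x', (if (avec' y).val = 0 then (1:ℝ) else 0)
    = if avec' = evec n m hn a' x' then 1 else 0 := by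
  by_cases hv : avec' = evec n m hn a' x'
  · subst hv
    have h1 : evec n m hn a' x' x' = a' := if_pos rfl
    rw [if_pos h1.symm, if_pos rfl, one_mul]
    apply Finset.prod_eq_one
    intro y hy
    have hyx : y ≠ x' := Finset.ne_of_mem_erase hy
    rw [if_pos]
    show (evec n m hn a' x' y).val = 0
    simp [evec, hyx]
  · rw [if_neg hv]
    by_cases h1 : a' = avec' x'
    · have hex : ∃ y, avec' y ≠ evec n m hn a' x' y := by
        by_contra hc; push_neg at hc; exact hv (funext hc)
      obtain ⟨y, hy⟩ := hex
      have hyx : y ≠ x' := by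
        intro e; subst e; apply hy; simp [evec, h1.symm]
      have hval : (avec' y).val ≠ 0 := by
        intro h0
        apply hy
        have h2 : avec' y = ⟨0, hn⟩ := Fin.ext h0
        simp [evec, hyx, h2]
      rw [if_pos h1, one_mul]
      exact Finset.prod_eq_zero (Finset.mem_erase.2 ⟨hyx, Finset.mem_univ y⟩) (if_neg hval)
    · rw [if_neg h1, zero_mul]

lemma Smat_eq (n m : ℕ) (hn : 0 < n) (a' : Fin n) (x' : Fin m) (avec' : Fin m → Fin n) :
    Smat n m (a', x') avec' =
      Real.sqrt ((n : ℝ) ^ (m - 1)) *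
        ((if a'.val = 0 ∧ x'.val = 0 then Real.sqrt m else 0)
          + 1 - (if a'.val = 0 then 1 else 0)) *
        (if avec' = evec n m hn a' x' then 1 else 0) := by
  show Real.sqrt ((n : ℝ) ^ (m - 1)) * _ * (if a' = avec' x' then (1:ℝ) else 0) *
      (∏ y ∈ Finset.univ.erase x', (if (avec' y).val = 0 then (1:ℝ) else 0)) = _
  rw [mul_assoc, ind_lemma n m hn a' x' avec']

lemma Vmat_evec (n m : ℕ) (hn : 0 < n) (avec : Fin m → Fin n) (a' : Fin n) (x' : Fin m) :
    Vmat n m avec (evec n m hn a' x') =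
      corrR n (avec x') a' * (1 / Real.sqrt n) ^ (m - 1) := by
  rw [Vmat, ← Finset.mul_prod_erase Finset.univ _ (Finset.mem_univ x')]
  congr 1
  · congr 1
    exact if_pos rfl
  · rw [Finset.prod_congr rfl (fun y hy => ?_), Finset.prod_const,
      Finset.card_erase_of_mem (Finset.mem_univ x'), Finset.card_univ, Fintype.card_fin]
    have hyx : y ≠ x' := Finset.ne_of_mem_erase hy
    have h2 : evec n m hn a' x' y = ⟨0, hn⟩ := if_neg hyx
    rw [h2]
    exact if_pos rfl

/-- exact singular value decomposition `D = U S Vᵀ` of the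
deterministic tensor `D_{(a,x),(a₁…a_m)} = δ_{a,a_x}`. -/
theorem stmt18 (n m : ℕ) (hn : 1 ≤ n) (hm : 1 ≤ m) :
    ∀ (a : Fin n) (x : Fin m) (avec : Fin m → Fin n),
      (if a = avec x then (1 : ℝ) else 0) =
        ∑ a' : Fin n, ∑ x' : Fin m, ∑ avec' : Fin m → Fin n,
          Umat n m (a, x) (a', x') * Smat n m (a', x') avec' * Vmat n m avec avec' := by
  intro a x avec
  have hn0 : 0 < n := hn
  have hm0 : 0 < m := hm
  have hsn : (0:ℝ) < Real.sqrt n := Real.sqrt_pos.2 (by exact_mod_cast hn0)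
  have hsm : (0:ℝ) < Real.sqrt m := Real.sqrt_pos.2 (by exact_mod_cast hm0)
  have hK : Real.sqrt ((n:ℝ) ^ (m-1)) * (1 / Real.sqrt n) ^ (m-1) = 1 := by
    have hpow : ∀ j : ℕ, Real.sqrt ((n:ℝ) ^ j) = (Real.sqrt n) ^ j := by
      intro j
      induction j with
      | zero => simp
      | succ j ih => rw [pow_succ, pow_succ, Real.sqrt_mul (by positivity), ih]
    rw [hpow, ← mul_pow, mul_one_div_cancel (ne_of_gt hsn), one_pow]
  have factor : ∀ u K c r p : ℝ, K * p = 1 → u * (K * c) * (r * p) = u * (c * r) := by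
    intro u K c r p h
    have : u * (K * c) * (r * p) = u * (c * r) * (K * p) := by ring
    rw [this, h, mul_one]
  -- Step 1: collapse the sum over avec'
  have step1 : ∀ (a' : Fin n) (x' : Fin m),
      (∑ avec' : Fin m → Fin n,
          Umat n m (a, x) (a', x') * Smat n m (a', x') avec' * Vmat n m avec avec')
      = Umat n m (a, x) (a', x') *
          ((((if a'.val = 0 ∧ x'.val = 0 then Real.sqrt m else 0) + 1
            - (if a'.val = 0 then 1 else 0))) * corrR n (avec x') a') := by
    intro a' x'
    have congr1 : ∀ avec' : Fin m → Fin n,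
        Umat n m (a, x) (a', x') * Smat n m (a', x') avec' * Vmat n m avec avec'
        = if avec' = evec n m hn0 a' x' then
            Umat n m (a, x) (a', x') *
              (Real.sqrt ((n:ℝ) ^ (m-1)) *
                ((if a'.val = 0 ∧ x'.val = 0 then Real.sqrt m else 0) + 1
                  - (if a'.val = 0 then 1 else 0))) * Vmat n m avec avec'
          else 0 := by
      intro avec'
      rw [Smat_eq n m hn0 a' x' avec']
      by_cases hv : avec' = evec n m hn0 a' x'
      · rw [if_pos hv, if_pos hv]; ring
      · rw [if_neg hv, if_neg hv]; ring
    rw [Finset.sum_congr rfl (fun avec' _ => congr1 avec'),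
      Finset.sum_ite_eq' Finset.univ (evec n m hn0 a' x'), if_pos (Finset.mem_univ _),
      Vmat_evec n m hn0 avec a' x']
    exact factor _ _ _ _ _ hK
  -- Step 2: collapse the sum over x'
  have step2 : ∀ a' : Fin n,
      (∑ x' : Fin m, Umat n m (a, x) (a', x') *
          ((((if a'.val = 0 ∧ x'.val = 0 then Real.sqrt m else 0) + 1
            - (if a'.val = 0 then 1 else 0))) * corrR n (avec x') a'))
      = corrR n a a' * corrR n (avec x) a' := by
    intro a'
    by_cases ha' : a'.val = 0
    · have congr2 : ∀ x' : Fin m, Umat n m (a, x) (a', x') *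
            ((((if a'.val = 0 ∧ x'.val = 0 then Real.sqrt m else 0) + 1
              - (if a'.val = 0 then 1 else 0))) * corrR n (avec x') a')
          = if x' = (⟨0, hm0⟩ : Fin m) then
              corrR n a a' * ((1 / Real.sqrt m) * (Real.sqrt m * (1 / Real.sqrt n)))
            else 0 := by
        intro x'
        show corrR n a a' * ctrlR n m a' x x' * _ = _
        rw [ctrlR, if_pos ha']
        by_cases hx' : x' = (⟨0, hm0⟩ : Fin m)
        · subst hx'
          rw [if_pos rfl]
          have hC : ((if a'.val = 0 ∧ ((⟨0, hm0⟩ : Fin m)).val = 0 then Real.sqrt m else 0) + 1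
              - (if a'.val = 0 then 1 else 0)) = Real.sqrt m := by
            simp [ha']
          rw [hC]
          have h1 : corrR m x ⟨0, hm0⟩ = 1 / Real.sqrt m := by simp [corrR]
          have h2 : corrR n (avec ⟨0, hm0⟩) a' = 1 / Real.sqrt n := by simp [corrR, ha']
          rw [h1, h2]
          ring
        · rw [if_neg hx']
          have hx'0 : ¬ x'.val = 0 := fun h => hx' (Fin.ext h)
          have hC : ((if a'.val = 0 ∧ x'.val = 0 then Real.sqrt m else 0) + 1
              - (if a'.val = 0 then 1 else 0)) = 0 := by
            simp [ha', hx'0]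
          rw [hC]
          ring
      rw [Finset.sum_congr rfl (fun x' _ => congr2 x'),
        Finset.sum_ite_eq' Finset.univ ((⟨0, hm0⟩ : Fin m)), if_pos (Finset.mem_univ _)]
      have h3 : corrR n (avec x) a' = 1 / Real.sqrt n := by simp [corrR, ha']
      rw [h3]
      have h4 : (1 / Real.sqrt m) * (Real.sqrt m * (1 / Real.sqrt n)) = 1 / Real.sqrt n := by
        field_simp
      rw [h4]
    · have congr2 : ∀ x' : Fin m, Umat n m (a, x) (a', x') *
            ((((if a'.val = 0 ∧ x'.val = 0 then Real.sqrt m else 0) + 1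
              - (if a'.val = 0 then 1 else 0))) * corrR n (avec x') a')
          = if x' = x then corrR n a a' * corrR n (avec x) a' else 0 := by
        intro x'
        show corrR n a a' * ctrlR n m a' x x' * _ = _
        rw [ctrlR, if_neg ha']
        have hC : ((if a'.val = 0 ∧ x'.val = 0 then Real.sqrt m else 0) + 1
            - (if a'.val = 0 then 1 else 0)) = 1 := by
          simp [ha']
        rw [hC]
        by_cases hx' : x' = x
        · subst hx'
          rw [if_pos rfl, if_pos rfl]
          ring
        · rw [if_neg (fun h => hx' h.symm), if_neg hx']
          ring
      rw [Finset.sum_congr rfl (fun x' _ => congr2 x'),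
        Finset.sum_ite_eq' Finset.univ x, if_pos (Finset.mem_univ _)]
  have main : ∀ a' : Fin n,
      (∑ x' : Fin m, ∑ avec' : Fin m → Fin n,
          Umat n m (a, x) (a', x') * Smat n m (a', x') avec' * Vmat n m avec avec')
      = corrR n a a' * corrR n (avec x) a' := by
    intro a'
    rw [Finset.sum_congr rfl (fun x' _ => step1 a' x')]
    exact step2 a'
  rw [Finset.sum_congr rfl (fun a' _ => main a'), row_ortho n a (avec x)]
end
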